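/- Let (X,T), (Y,S) be minimal systems and φ : (X,T) → (Z,R) a factor map onto a minimal system. If X is quasi-disjoint from Y, then Z is quasi-disjoint from Y. -/

import Mathlib

open Filter Topology Set

/-- A map between topological spaces is *semiopen* if the image of every
nonempty open set has nonempty interior. -/
def SemiOpen {X Y : Type*} [TopologicalSpace X] [TopologicalSpace Y] (f : X → Y) : Prop :=
  ∀ U : Set X, IsOpen U → U.Nonempty → (interior (f '' U)).Nonempty

/-- The `n`-th iterate (`n : ℤ`) of a homeomorphism. -/
def zIter {X : Type*} [TopologicalSpace X] (T : X ≃ₜ X) (n : ℤ) : X → X :=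
  fun x => (T.toEquiv ^ n) x

/-- The two-sided orbit of a point under a homeomorphism. -/
def zOrbit {X : Type*} [TopologicalSpace X] (T : X ≃ₜ X) (x : X) : Set X :=
  Set.range fun n : ℤ => zIter T n x

/-- A system is minimal if every orbit is dense. -/
def IsMinimalSystem {X : Type*} [TopologicalSpace X] (T : X ≃ₜ X) : Prop :=
  ∀ x : X, Dense (zOrbit T x)

/-- A minimal subset: nonempty, closed, invariant, with no proper nonempty
closed invariant subset. -/
def IsMinimalSubset {X : Type*} [TopologicalSpace X] (T : X ≃ₜ X) (M : Set X) : Prop :=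
  M.Nonempty ∧ IsClosed M ∧ T '' M = M ∧
    ∀ M' ⊆ M, M'.Nonempty → IsClosed M' → T '' M' = M' → M' = M

/-- A factor map between systems. -/
def IsFactorMap {X Y : Type*} [TopologicalSpace X] [TopologicalSpace Y]
    (T : X ≃ₜ X) (S : Y ≃ₜ Y) (f : X → Y) : Prop :=
  Continuous f ∧ Function.Surjective f ∧ ∀ x, f (T x) = S (f x)

/-- The regionally proximal relation. -/
def RP {X : Type*} [MetricSpace X] (T : X ≃ₜ X) : Set (X × X) :=
  {p | ∃ (u v : ℕ → X) (n : ℕ → ℤ),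
    Tendsto u atTop (𝓝 p.1) ∧ Tendsto v atTop (𝓝 p.2) ∧
    Tendsto (fun i => dist (zIter T (n i) (u i)) (zIter T (n i) (v i))) atTop (𝓝 0)}

/-- A joining of two systems: a closed invariant subset of the product with
full projections onto both coordinates. -/
def IsJoining {X Y : Type*} [TopologicalSpace X] [TopologicalSpace Y]
    (T : X ≃ₜ X) (S : Y ≃ₜ Y) (J : Set (X × Y)) : Prop :=
  IsClosed J ∧ (T.prodCongr S) '' J = J ∧
    Prod.fst '' J = Set.univ ∧ Prod.snd '' J = Set.univ

/-- `J` projects onto `X_eq × Y_eq`: phrased via the regionally proximal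
relation, every product of RP-cells meets `J`. -/
def FullEqProjection {X Y : Type*} [MetricSpace X] [MetricSpace Y]
    (T : X ≃ₜ X) (S : Y ≃ₜ Y) (J : Set (X × Y)) : Prop :=
  ∀ x : X, ∀ y : Y, ∃ p ∈ J, (x, p.1) ∈ RP T ∧ (y, p.2) ∈ RP S

/-- Two minimal systems are quasi-disjoint if the full product is the only
joining projecting onto the product of the maximal equicontinuous factors. -/
def QuasiDisjoint {X Y : Type*} [MetricSpace X] [MetricSpace Y]
    (T : X ≃ₜ X) (S : Y ≃ₜ Y) : Prop :=
  ∀ J : Set (X × Y), IsJoining T S J → FullEqProjection T S J → J = Set.univ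

/-- Two systems are disjoint if the full product is the only joining. -/
def DisjointSystems {X Y : Type*} [TopologicalSpace X] [TopologicalSpace Y]
    (T : X ≃ₜ X) (S : Y ≃ₜ Y) : Prop :=
  ∀ J : Set (X × Y), IsJoining T S J → J = Set.univ

/-- A system is equicontinuous (with respect to all integer iterates). -/
def EquicontinuousSystem {X : Type*} [MetricSpace X] (T : X ≃ₜ X) : Prop :=
  ∀ ε > (0 : ℝ), ∃ δ > (0 : ℝ), ∀ x₁ x₂ : X, dist x₁ x₂ < δ →
    ∀ n : ℤ, dist (zIter T n x₁) (zIter T n x₂) < ε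

/-- A pair of points is proximal. -/
def ProximalPair {X : Type*} [MetricSpace X] (T : X ≃ₜ X) (x₁ x₂ : X) : Prop :=
  ∀ ε > (0 : ℝ), ∃ n : ℤ, dist (zIter T n x₁) (zIter T n x₂) < ε

section ZIter

variable {X : Type*} [TopologicalSpace X] (T : X ≃ₜ X)

lemma zIter_zero (x : X) : zIter T 0 x = x := rfl

lemma zIter_add (m n : ℤ) (x : X) : zIter T (m + n) x = zIter T m (zIter T n x) := by
  simp [zIter, zpow_add, Equiv.Perm.mul_apply]

lemma zIter_add_one (n : ℤ) (x : X) : zIter T (n + 1) x = zIter T n (T x) := by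
  have : zIter T (n + 1) x = zIter T n (zIter T 1 x) := zIter_add T n 1 x
  simpa [zIter] using this

lemma zIter_one_add (n : ℤ) (x : X) : zIter T (1 + n) x = T (zIter T n x) := by
  have : zIter T (1 + n) x = zIter T 1 (zIter T n x) := zIter_add T 1 n x
  simpa [zIter] using this

lemma zIter_sub_one (n : ℤ) (x : X) : zIter T (n - 1) x = zIter T n (T.symm x) := by
  have : zIter T (n - 1 + 1) (T.symm x) = zIter T (n - 1) (T (T.symm x)) :=
    zIter_add_one T (n - 1) (T.symm x)
  simp only [sub_add_cancel, Homeomorph.apply_symm_apply] at this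
  exact this.symm

lemma zIter_neg_cancel (n : ℤ) (x : X) : zIter T (-n) (zIter T n x) = x := by
  have := (zIter_add T (-n) n x).symm
  simpa [zIter_zero] using this

lemma continuous_zIter (n : ℤ) : Continuous (zIter T n) := by
  induction n using Int.induction_on with
  | zero => exact continuous_id
  | succ k ih =>
      have : zIter T ((k : ℤ) + 1) = fun x => zIter T k (T x) := by
        funext x; exact zIter_add_one T k x
      rw [this]; exact ih.comp T.continuous
  | pred k ih =>
      have : zIter T (-(k : ℤ) - 1) = fun x => zIter T (-k) (T.symm x) := by
        funext x; exact zIter_sub_one T (-k) x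
      rw [this]; exact ih.comp T.symm.continuous

/-- equivariance of iterates under a factor map -/
lemma zIter_neg_one (y : X) : zIter T (-1) y = T.symm y := by
  simp only [zIter, zpow_neg, zpow_one]
  rfl

lemma zIter_neg_one_add (n : ℤ) (x : X) : zIter T (-1 + n) x = T.symm (zIter T n x) := by
  rw [zIter_add]; exact zIter_neg_one T _

lemma zIter_factor {Z : Type*} [TopologicalSpace Z] (Rz : Z ≃ₜ Z) (φ : X → Z)
    (hfac : ∀ x, φ (T x) = Rz (φ x)) (n : ℤ) (x : X) :
    φ (zIter T n x) = zIter Rz n (φ x) := by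
  have hsymm : ∀ x, φ (T.symm x) = Rz.symm (φ x) := by
    intro x
    apply Rz.injective
    rw [← hfac (T.symm x)]
    simp
  induction n using Int.induction_on with
  | zero => simp [zIter]
  | succ k ih =>
      rw [show ((k:ℤ)+1) = 1 + (k:ℤ) by ring, zIter_one_add, hfac, ih, ← zIter_one_add]
  | pred k ih =>
      rw [show (-(k:ℤ)-1) = -1 + (-(k:ℤ)) by ring, zIter_neg_one_add, hsymm, ih,
        ← zIter_neg_one_add]

end ZIter

section RPBasic

variable {X : Type*} [MetricSpace X] (T : X ≃ₜ X)

lemma tendsto_one_div_succ : Tendsto (fun k : ℕ => 1/((k:ℝ)+1)) atTop (𝓝 0) :=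
  tendsto_one_div_add_atTop_nhds_zero_nat

lemma RP_witness_exists {a b : X} (h : (a, b) ∈ RP T) (ε : ℝ) (hε : 0 < ε) :
    ∃ (x y : X) (n : ℤ), dist x a < ε ∧ dist y b < ε ∧
      dist (zIter T n x) (zIter T n y) < ε := by
  obtain ⟨u, v, n, hu, hv, hc⟩ := h
  have e1 : ∀ᶠ i in atTop, dist (u i) a < ε := by
    have := Metric.tendsto_nhds.1 hu ε hε
    simpa using this
  have e2 : ∀ᶠ i in atTop, dist (v i) b < ε := by
    have := Metric.tendsto_nhds.1 hv ε hε
    simpa using this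
  have e3 : ∀ᶠ i in atTop, dist (zIter T (n i) (u i)) (zIter T (n i) (v i)) < ε :=
    hc.eventually (gt_mem_nhds hε)
  obtain ⟨i, h1, h2, h3⟩ := (e1.and (e2.and e3)).exists
  exact ⟨u i, v i, n i, h1, h2, h3⟩

/-- a convenient constructor for RP membership -/
lemma RP_of_approx {a b : X} (A B : ℕ → X) (N : ℕ → ℤ)
    (hA : Tendsto A atTop (𝓝 a)) (hB : Tendsto B atTop (𝓝 b))
    (hC : Tendsto (fun k => dist (zIter T (N k) (A k)) (zIter T (N k) (B k))) atTop (𝓝 0)) :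
    (a, b) ∈ RP T := ⟨A, B, N, hA, hB, hC⟩

lemma isClosed_RP : IsClosed (RP T) := by
  rw [← isSeqClosed_iff_isClosed]
  intro p q hp hq
  have hq1 : Tendsto (fun k => (p k).1) atTop (𝓝 q.1) := (continuous_fst.tendsto q).comp hq
  have hq2 : Tendsto (fun k => (p k).2) atTop (𝓝 q.2) := (continuous_snd.tendsto q).comp hq
  have key : ∀ k : ℕ, ∃ (x y : X) (n : ℤ),
      dist x (p k).1 < 1/((k:ℝ)+1) ∧ dist y (p k).2 < 1/((k:ℝ)+1) ∧
      dist (zIter T n x) (zIter T n y) < 1/((k:ℝ)+1) := by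
    intro k
    exact RP_witness_exists T (hp k) _ (by positivity)
  choose A B N h1 h2 h3 using key
  refine RP_of_approx T A B N ?_ ?_ ?_
  · rw [tendsto_iff_dist_tendsto_zero]
    apply squeeze_zero (fun k => dist_nonneg)
      (g := fun k : ℕ => 1/((k:ℝ)+1) + dist ((p k).1) q.1)
    · intro k
      calc dist (A k) q.1 ≤ dist (A k) ((p k).1) + dist ((p k).1) q.1 := dist_triangle _ _ _
        _ ≤ 1/((k:ℝ)+1) + dist ((p k).1) q.1 := by
            have := (h1 k).le; linarith
    · have : Tendsto (fun k => dist ((p k).1) q.1) atTop (𝓝 0) :=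
        tendsto_iff_dist_tendsto_zero.1 hq1
      simpa using (tendsto_one_div_succ).add this
  · rw [tendsto_iff_dist_tendsto_zero]
    apply squeeze_zero (fun k => dist_nonneg)
      (g := fun k : ℕ => 1/((k:ℝ)+1) + dist ((p k).2) q.2)
    · intro k
      calc dist (B k) q.2 ≤ dist (B k) ((p k).2) + dist ((p k).2) q.2 := dist_triangle _ _ _
        _ ≤ 1/((k:ℝ)+1) + dist ((p k).2) q.2 := by
            have := (h2 k).le; linarith
    · have : Tendsto (fun k => dist ((p k).2) q.2) atTop (𝓝 0) :=
        tendsto_iff_dist_tendsto_zero.1 hq2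
      simpa using (tendsto_one_div_succ).add this
  · apply squeeze_zero (fun k => dist_nonneg) (g := fun k : ℕ => 1/((k:ℝ)+1))
    · exact fun k => (h3 k).le
    · exact tendsto_one_div_succ

lemma RP_map {a b : X} (h : (a, b) ∈ RP T) : (T a, T b) ∈ RP T := by
  obtain ⟨u, v, n, hu, hv, hc⟩ := h
  refine ⟨fun i => T (u i), fun i => T (v i), fun i => n i - 1, ?_, ?_, ?_⟩
  · exact (T.continuous.tendsto a).comp hu
  · exact (T.continuous.tendsto b).comp hv
  · convert hc using 2 with i
    rw [zIter_sub_one, zIter_sub_one]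
    simp
lemma RP_map_symm {a b : X} (h : (a, b) ∈ RP T) : (T.symm a, T.symm b) ∈ RP T := by
  obtain ⟨u, v, n, hu, hv, hc⟩ := h
  refine ⟨fun i => T.symm (u i), fun i => T.symm (v i), fun i => n i + 1, ?_, ?_, ?_⟩
  · exact (T.symm.continuous.tendsto a).comp hu
  · exact (T.symm.continuous.tendsto b).comp hv
  · convert hc using 2 with i
    rw [zIter_add_one, zIter_add_one]
    simp

end RPBasic

section Invariance

variable {W : Type*} [TopologicalSpace W]

lemma mem_iff_of_image_eq (g : W ≃ₜ W) {A : Set W} (hinv : g '' A = A) (x : W) :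
    x ∈ A ↔ g x ∈ A := by
  constructor
  · intro hx; rw [← hinv]; exact mem_image_of_mem _ hx
  · intro hx
    rw [← hinv] at hx
    obtain ⟨y, hy, hyx⟩ := hx
    rwa [← g.injective hyx]

lemma symm_mem_iff_of_image_eq (g : W ≃ₜ W) {A : Set W} (hinv : g '' A = A) (x : W) :
    g.symm x ∈ A ↔ x ∈ A := by
  rw [mem_iff_of_image_eq g hinv (g.symm x)]
  simp

lemma image_eq_of_mem_iff (g : W ≃ₜ W) {A : Set W} (hiff : ∀ x, x ∈ A ↔ g x ∈ A) :
    g '' A = A := by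
  apply Set.eq_of_subset_of_subset
  · rintro q ⟨p, hp, rfl⟩
    exact (hiff p).1 hp
  · intro q hq
    refine ⟨g.symm q, ?_, by simp⟩
    rw [hiff (g.symm q)]
    simpa using hq

end Invariance

section MinimalSubsets

variable {W : Type*} [TopologicalSpace W] [CompactSpace W] [T2Space W] (H : W ≃ₜ W)

lemma zOrbit_subset_of_invariant {A : Set W} (hinv : H '' A = A) {a : W} (ha : a ∈ A) :
    zOrbit H a ⊆ A := by
  rintro _ ⟨n, rfl⟩
  induction n using Int.induction_on with
  | zero => simpa [zIter] using ha
  | succ k ih =>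
      show zIter H ((k:ℤ)+1) a ∈ A
      rw [show ((k:ℤ)+1) = 1 + (k:ℤ) by ring, zIter_one_add]
      exact (mem_iff_of_image_eq H hinv _).1 ih
  | pred k ih =>
      show zIter H (-(k:ℤ)-1) a ∈ A
      rw [show (-(k:ℤ)-1) = -1 + (-(k:ℤ)) by ring, zIter_neg_one_add]
      exact (symm_mem_iff_of_image_eq H hinv _).2 ih

lemma eq_univ_of_closed_invariant (hmin : IsMinimalSystem H) {A : Set W}
    (hA : IsClosed A) (hne : A.Nonempty) (hinv : H '' A = A) : A = Set.univ := by
  obtain ⟨a, ha⟩ := hne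
  have h1 : closure (zOrbit H a) ⊆ A := hA.closure_subset_iff.2 (zOrbit_subset_of_invariant H hinv ha)
  have h2 := (hmin a).closure_eq
  rw [h2] at h1
  exact Set.eq_of_subset_of_subset (Set.subset_univ _) h1

lemma exists_minimal_subset {A : Set W} (hA : IsClosed A) (hne : A.Nonempty)
    (hinv : H '' A = A) : ∃ M, M ⊆ A ∧ IsMinimalSubset H M := by
  set S : Set (Set W) := {B | B ⊆ A ∧ B.Nonempty ∧ IsClosed B ∧ H '' B = B} with hS
  have hAS : A ∈ S := ⟨Set.Subset.rfl, hne, hA, hinv⟩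
  have hz := zorn_superset_nonempty S ?_ A hAS
  · obtain ⟨m, hmA, hmmin⟩ := hz
    refine ⟨m, hmA, hmmin.1.2.1, hmmin.1.2.2.1, hmmin.1.2.2.2, ?_⟩
    intro M' hM'm hM'ne hM'cl hM'inv
    have hM'S : M' ∈ S := ⟨hM'm.trans hmA, hM'ne, hM'cl, hM'inv⟩
    exact Set.eq_of_subset_of_subset hM'm (hmmin.2 hM'S hM'm)
  · intro c hcS hchain hcne
    have : Nonempty c := hcne.to_subtype
    refine ⟨⋂₀ c, ⟨?_, ?_, ?_, ?_⟩, fun s hs => Set.sInter_subset_of_mem hs⟩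
    · obtain ⟨s, hs⟩ := hcne
      exact (Set.sInter_subset_of_mem hs).trans (hcS hs).1
    · rw [Set.sInter_eq_iInter]
      apply IsCompact.nonempty_iInter_of_directed_nonempty_isCompact_isClosed
      · rintro ⟨s, hs⟩ ⟨t, ht⟩
        rcases hchain.total hs ht with h | h
        · exact ⟨⟨s, hs⟩, Set.Subset.rfl, h⟩
        · exact ⟨⟨t, ht⟩, h, Set.Subset.rfl⟩
      · exact fun i => (hcS i.2).2.1
      · exact fun i => (hcS i.2).2.2.1.isCompact
      · exact fun i => (hcS i.2).2.2.1
    · exact isClosed_sInter fun s hs => (hcS hs).2.2.1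
    · rw [Set.sInter_eq_iInter, image_iInter H.bijective]
      exact Set.iInter_congr fun i => (hcS i.2).2.2.2

lemma IsMinimalSubset.image_commute {g : W ≃ₜ W}
    (hcomm : ∀ w, H (g w) = g (H w)) {M : Set W} (hM : IsMinimalSubset H M) :
    IsMinimalSubset H (g '' M) := by
  obtain ⟨hne, hcl, hinv, hmin⟩ := hM
  have hfe : (⇑H ∘ ⇑g) = (⇑g ∘ ⇑H) := funext fun w => hcomm w
  have himg : ∀ B : Set W, H '' (g '' B) = g '' (H '' B) := by
    intro B
    rw [← Set.image_comp, hfe, Set.image_comp]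
  refine ⟨hne.image g, (hcl.isCompact.image g.continuous).isClosed, by rw [himg, hinv], ?_⟩
  intro M' hM's hM'ne hM'cl hM'inv
  have h1 : g.symm '' M' ⊆ M := by
    intro x hx
    obtain ⟨y, hy, rfl⟩ := hx
    obtain ⟨m, hm, hmy⟩ := hM's hy
    rw [← hmy]; simpa using hm
  have h2 : H '' (g.symm '' M') = g.symm '' M' := by
    have hcomm' : ∀ w, H (g.symm w) = g.symm (H w) := by
      intro w
      apply g.injective
      rw [← hcomm (g.symm w)]
      simp
    have hfe' : (⇑H ∘ ⇑g.symm) = (⇑g.symm ∘ ⇑H) := funext fun w => hcomm' w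
    have : H '' (g.symm '' M') = g.symm '' (H '' M') := by
      rw [← Set.image_comp, hfe', Set.image_comp]
    rw [this, hM'inv]
  have h3 := hmin (g.symm '' M') h1 (hM'ne.image _)
    ((hM'cl.isCompact.image g.symm.continuous).isClosed) h2
  calc M' = g '' (g.symm '' M') := by rw [← Set.image_comp]; simp
    _ = g '' M := by rw [h3]

end MinimalSubsets

section ProjMinimal

variable {A B : Type*} [TopologicalSpace A] [TopologicalSpace B]
  [CompactSpace A] [CompactSpace B] [T2Space A] [T2Space B]
  (HA : A ≃ₜ A) (HB : B ≃ₜ B)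

lemma fst_image_invariant {Γ : Set (A × B)} (hinv : (HA.prodCongr HB) '' Γ = Γ) :
    HA '' (Prod.fst '' Γ) = Prod.fst '' Γ := by
  conv_rhs => rw [← hinv]
  rw [← Set.image_comp, ← Set.image_comp]
  rfl

lemma exists_mem_minimal_fiber {Λ : Set A} (hΛ : IsMinimalSubset HA Λ)
    {Γ : Set (A × B)} (hcl : IsClosed Γ) (hne : Γ.Nonempty)
    (hinv : (HA.prodCongr HB) '' Γ = Γ)
    (hsub : ∀ q ∈ Γ, q.1 ∈ Λ) {ξ : A} (hξ : ξ ∈ Λ) : ∃ q ∈ Γ, q.1 = ξ := by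
  obtain ⟨M, hMΓ, hMne, hMcl, hMinv, hMmin⟩ := exists_minimal_subset (HA.prodCongr HB) hcl hne hinv
  set P := Prod.fst '' M with hP
  have hPcl : IsClosed P := (hMcl.isCompact.image continuous_fst).isClosed
  have hPinv : HA '' P = P := fst_image_invariant HA HB hMinv
  have hPsub : P ⊆ Λ := by
    rintro _ ⟨q, hq, rfl⟩
    exact hsub q (hMΓ hq)
  have hPeq : P = Λ := hΛ.2.2.2 P hPsub (hMne.image _) hPcl hPinv
  have : ξ ∈ P := hPeq ▸ hξ
  obtain ⟨q, hq, hq1⟩ := this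
  exact ⟨q, hMΓ hq, hq1⟩

lemma exists_mem_fiber_of_minimal (hmin : IsMinimalSystem HA)
    {Γ : Set (A × B)} (hcl : IsClosed Γ) (hne : Γ.Nonempty)
    (hinv : (HA.prodCongr HB) '' Γ = Γ) (ξ : A) : ∃ q ∈ Γ, q.1 = ξ := by
  obtain ⟨M, hMΓ, hMne, hMcl, hMinv, hMmin⟩ := exists_minimal_subset (HA.prodCongr HB) hcl hne hinv
  have hPcl : IsClosed (Prod.fst '' M) := (hMcl.isCompact.image continuous_fst).isClosed
  have hPinv : HA '' (Prod.fst '' M) = Prod.fst '' M := fst_image_invariant HA HB hMinv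
  have hPeq : Prod.fst '' M = Set.univ :=
    eq_univ_of_closed_invariant HA hmin hPcl (hMne.image _) hPinv
  have : ξ ∈ Prod.fst '' M := hPeq ▸ Set.mem_univ ξ
  obtain ⟨q, hq, hq1⟩ := this
  exact ⟨q, hMΓ hq, hq1⟩

end ProjMinimal

section ZHomeo

variable {Y : Type*} [TopologicalSpace Y] (S : Y ≃ₜ Y)

lemma zIter_comm (k : ℤ) (y : Y) : zIter S k (S y) = S (zIter S k y) := by
  rw [← zIter_add_one, show k+1 = 1+k by ring, zIter_one_add]

def zHomeo (k : ℤ) : Y ≃ₜ Y where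
  toEquiv := S.toEquiv ^ k
  continuous_toFun := continuous_zIter S k
  continuous_invFun := by
    have h : (S.toEquiv ^ k).invFun = zIter S (-k) := by
      funext y
      show (S.toEquiv ^ k).symm y = _
      rw [zIter, zpow_neg]
      rfl
    rw [h]
    exact continuous_zIter S (-k)

lemma zHomeo_coe (k : ℤ) : ⇑(zHomeo S k) = zIter S k := rfl

end ZHomeo

section DenseMinimal

variable {X Y : Type*} [TopologicalSpace X] [TopologicalSpace Y]
  [CompactSpace X] [CompactSpace Y] [T2Space X] [T2Space Y]
  (T : X ≃ₜ X) (S : Y ≃ₜ Y)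

lemma dense_minimal_points [Nonempty X] [Nonempty Y]
    (hX : IsMinimalSystem T) (hY : IsMinimalSystem S) :
    Dense {ξ : X × Y | ∃ Λ, IsMinimalSubset (T.prodCongr S) Λ ∧ ξ ∈ Λ} := by
  -- a minimal subset of the product
  have huniv : (T.prodCongr S) '' (Set.univ : Set (X × Y)) = Set.univ := by
    rw [Set.image_univ]
    exact (T.prodCongr S).surjective.range_eq
  obtain ⟨M₀, -, hM₀⟩ := exists_minimal_subset (T.prodCongr S)
    isClosed_univ Set.univ_nonempty huniv
  -- translated copies
  have hcommk : ∀ (k : ℤ) w, (T.prodCongr S) (((Homeomorph.refl X).prodCongr (zHomeo S k)) w)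
      = ((Homeomorph.refl X).prodCongr (zHomeo S k)) ((T.prodCongr S) w) := by
    intro k w
    show (T w.1, S (zIter S k w.2)) = (T w.1, zIter S k (S w.2))
    rw [zIter_comm]
  set F : ℤ → Set (X × Y) :=
    fun k => ((Homeomorph.refl X).prodCongr (zHomeo S k)) '' M₀ with hF
  have hFmin : ∀ k, IsMinimalSubset (T.prodCongr S) (F k) :=
    fun k => IsMinimalSubset.image_commute (T.prodCongr S) (hcommk k) hM₀
  -- density of the union
  set U := ⋃ k, F k with hU
  have hUinv : (T.prodCongr S) '' U = U := by
    rw [hU, Set.image_iUnion]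
    exact Set.iUnion_congr fun k => (hFmin k).2.2.1
  have hgSF : ∀ k : ℤ, ((Homeomorph.refl X).prodCongr S) '' F k = F (k + 1) := by
    intro k
    have hfe : (⇑((Homeomorph.refl X).prodCongr S) ∘
        ⇑((Homeomorph.refl X).prodCongr (zHomeo S k)))
        = ⇑((Homeomorph.refl X).prodCongr (zHomeo S (k+1))) := by
      funext p
      show (p.1, S (zIter S k p.2)) = (p.1, zIter S (k+1) p.2)
      rw [show k+1 = 1+k by ring, zIter_one_add]
    show ((Homeomorph.refl X).prodCongr S) ''
        (((Homeomorph.refl X).prodCongr (zHomeo S k)) '' M₀) = _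
    rw [← Set.image_comp, hfe]
  have hUinvS : ((Homeomorph.refl X).prodCongr S) '' U = U := by
    rw [hU, Set.image_iUnion]
    apply Set.eq_of_subset_of_subset
    · refine Set.iUnion_subset fun k => ?_
      rw [hgSF k]
      exact Set.subset_iUnion _ (k+1)
    · refine Set.iUnion_subset fun k => ?_
      have : F k = ((Homeomorph.refl X).prodCongr S) '' F (k - 1) := by
        rw [hgSF (k-1), sub_add_cancel]
      rw [this]
      exact Set.image_mono (Set.subset_iUnion F (k-1)) |>.trans
        (by rw [Set.image_iUnion])
  set D := closure U with hD
  have hDcl : IsClosed D := isClosed_closure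
  have hDinv : (T.prodCongr S) '' D = D := by
    rw [hD, (T.prodCongr S).image_closure, hUinv]
  have hDinvS : ((Homeomorph.refl X).prodCongr S) '' D = D := by
    rw [hD, ((Homeomorph.refl X).prodCongr S).image_closure, hUinvS]
  have hDne : D.Nonempty := by
    obtain ⟨m, hm⟩ := hM₀.1
    exact ⟨((Homeomorph.refl X).prodCongr (zHomeo S 0)) m,
      subset_closure (Set.mem_iUnion.2 ⟨0, Set.mem_image_of_mem _ hm⟩)⟩
  -- D = univ
  have hDuniv : D = Set.univ := by
    have hAcl : IsClosed (Prod.fst '' D) := (hDcl.isCompact.image continuous_fst).isClosed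
    have hAinv : T '' (Prod.fst '' D) = Prod.fst '' D := fst_image_invariant T S hDinv
    have hAuniv : Prod.fst '' D = Set.univ :=
      eq_univ_of_closed_invariant T hX hAcl (hDne.image _) hAinv
    apply Set.eq_of_subset_of_subset (Set.subset_univ _)
    rintro ⟨x, y⟩ -
    set B := {y' : Y | (x, y') ∈ D} with hB
    have hBcl : IsClosed B := hDcl.preimage (Continuous.prodMk_right x)
    have hBne : B.Nonempty := by
      have : x ∈ Prod.fst '' D := hAuniv ▸ Set.mem_univ x
      obtain ⟨q, hq, hq1⟩ := this
      exact ⟨q.2, by rwa [hB, Set.mem_setOf_eq, ← hq1]⟩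
    have hBinv : S '' B = B := by
      apply image_eq_of_mem_iff
      intro y'
      have := mem_iff_of_image_eq ((Homeomorph.refl X).prodCongr S) hDinvS (x, y')
      exact this
    have hBuniv := eq_univ_of_closed_invariant S hY hBcl hBne hBinv
    have : y ∈ B := hBuniv ▸ Set.mem_univ y
    exact this
  have hdU : Dense U := by
    rw [dense_iff_closure_eq, ← hD, hDuniv]
  apply hdU.mono
  rw [hU]
  refine Set.iUnion_subset fun k p hp => ?_
  exact ⟨F k, hFmin k, hp⟩

end DenseMinimal

section GoodPoints

variable {X Z : Type*} [MetricSpace X] [CompactSpace X] [MetricSpace Z] [CompactSpace Z]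

/-- pointwise lower semicontinuity of fibers at `z` -/
def GoodPt (φ : X → Z) (z : Z) : Prop :=
  ∀ x, φ x = z → ∀ ε > (0:ℝ), ∃ δ > (0:ℝ), ∀ ζ, dist ζ z < δ →
    Metric.infDist x (φ ⁻¹' {ζ}) < ε

lemma fiber_lsc (φ : X → Z) (hc : Continuous φ) (hs : Function.Surjective φ)
    (x₀ : X) (z : Z) (ε : ℝ) (hε : 0 < ε) :
    ∃ δ > (0:ℝ), ∀ ζ, dist ζ z < δ →
      Metric.infDist x₀ (φ ⁻¹' {z}) - ε < Metric.infDist x₀ (φ ⁻¹' {ζ}) := by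
  by_contra hcon
  push_neg at hcon
  have key : ∀ k : ℕ, ∃ ζ, dist ζ z < 1/((k:ℝ)+1) ∧
      Metric.infDist x₀ (φ ⁻¹' {ζ}) ≤ Metric.infDist x₀ (φ ⁻¹' {z}) - ε := by
    intro k
    obtain ⟨ζ, h1, h2⟩ := hcon (1/((k:ℝ)+1)) (by positivity)
    exact ⟨ζ, h1, h2⟩
  choose ζs h1 h2 using key
  have hζs : Tendsto ζs atTop (𝓝 z) := by
    rw [tendsto_iff_dist_tendsto_zero]
    apply squeeze_zero (fun k => dist_nonneg) (fun k => (h1 k).le) tendsto_one_div_succ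
  set c := Metric.infDist x₀ (φ ⁻¹' {z}) with hcdef
  have hcε : 0 ≤ c - ε := le_trans Metric.infDist_nonneg (h2 0)
  have hx : ∀ k : ℕ, ∃ x, φ x = ζs k ∧ dist x₀ x < c - ε + 1/((k:ℝ)+1) := by
    intro k
    have hne : (φ ⁻¹' {ζs k}).Nonempty := by
      obtain ⟨x, hx⟩ := hs (ζs k)
      exact ⟨x, hx⟩
    have hlt : Metric.infDist x₀ (φ ⁻¹' {ζs k}) < c - ε + 1/((k:ℝ)+1) := by
      have : (0:ℝ) < 1/((k:ℝ)+1) := by positivity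
      linarith [h2 k]
    obtain ⟨y, hy, hdy⟩ := (Metric.infDist_lt_iff hne).1 hlt
    exact ⟨y, hy, hdy⟩
  choose xs hxs hdxs using hx
  obtain ⟨x', -, σ, hσ, hconv⟩ := isCompact_univ.tendsto_subseq (fun k => Set.mem_univ (xs k))
  have hφx' : φ x' = z := by
    have h1' : Tendsto (fun k => φ (xs (σ k))) atTop (𝓝 (φ x')) :=
      (hc.tendsto x').comp hconv
    have h2' : Tendsto (fun k => φ (xs (σ k))) atTop (𝓝 z) := by
      have : (fun k => φ (xs (σ k))) = fun k => ζs (σ k) := by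
        funext k; exact hxs (σ k)
      rw [this]
      exact hζs.comp hσ.tendsto_atTop
    exact tendsto_nhds_unique h1' h2'
  have hle : dist x₀ x' ≤ c - ε := by
    have hd : Tendsto (fun k => dist x₀ (xs (σ k))) atTop (𝓝 (dist x₀ x')) :=
      (Continuous.tendsto (continuous_const.dist continuous_id) x').comp hconv
    have hg : Tendsto (fun k : ℕ => c - ε + 1/((k:ℝ)+1)) atTop (𝓝 (c - ε)) := by
      have := tendsto_const_nhds (x := c - ε) (f := atTop (α := ℕ)) |>.add tendsto_one_div_succ
      simpa using this
    refine le_of_tendsto_of_tendsto' hd hg ?_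
    intro k
    have hσk : (k:ℝ) ≤ (σ k : ℝ) := by exact_mod_cast hσ.le_apply
    have hmono : 1/((σ k:ℝ)+1) ≤ 1/((k:ℝ)+1) := by
      apply one_div_le_one_div_of_le <;> linarith
    have := (hdxs (σ k)).le
    linarith
  have : c ≤ dist x₀ x' := Metric.infDist_le_dist_of_mem (by simpa [Set.mem_preimage] using hφx')
  linarith

/-- sublevel sets of the fiber-distance functions are closed -/
lemma isClosed_fiber_sublevel (φ : X → Z) (hc : Continuous φ) (hs : Function.Surjective φ)
    (x₀ : X) (q : ℝ) : IsClosed {z : Z | Metric.infDist x₀ (φ ⁻¹' {z}) ≤ q} := by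
  rw [← isOpen_compl_iff]
  rw [Metric.isOpen_iff]
  intro z hz
  simp only [Set.mem_compl_iff, Set.mem_setOf_eq, not_le] at hz
  obtain ⟨δ, hδ, hδp⟩ := fiber_lsc φ hc hs x₀ z (Metric.infDist x₀ (φ ⁻¹' {z}) - q) (by linarith)
  refine ⟨δ, hδ, ?_⟩
  intro ζ hζ
  rw [Metric.mem_ball] at hζ
  simp only [Set.mem_compl_iff, Set.mem_setOf_eq, not_le]
  have := hδp ζ hζ
  linarith

lemma dense_goodPt [Nonempty X] (φ : X → Z) (hc : Continuous φ) (hs : Function.Surjective φ) :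
    Dense {z : Z | GoodPt φ z} := by
  obtain ⟨e, he⟩ := TopologicalSpace.exists_dense_seq X
  set Sset : ℕ × ℚ → Set Z :=
    fun jq => {z : Z | Metric.infDist (e jq.1) (φ ⁻¹' {z}) ≤ (jq.2 : ℝ)} with hSset
  have hScl : ∀ jq, IsClosed (Sset jq) := fun jq => isClosed_fiber_sublevel φ hc hs _ _
  have hRES : Dense (⋂ jq, (frontier (Sset jq))ᶜ) := by
    apply dense_iInter_of_isOpen
    · exact fun jq => (isClosed_frontier).isOpen_compl
    · intro jq
      rw [← interior_eq_empty_iff_dense_compl]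
      exact interior_frontier (hScl jq)
  apply hRES.mono
  intro z hz
  simp only [Set.mem_iInter, Set.mem_compl_iff] at hz
  intro x hx ε hε
  -- choose a dense-sequence point near x
  obtain ⟨j, hj⟩ := he.exists_dist_lt x (show (0:ℝ) < ε/4 by linarith)
  have hdjz : Metric.infDist (e j) (φ ⁻¹' {z}) < ε/4 := by
    calc Metric.infDist (e j) (φ ⁻¹' {z}) ≤ dist (e j) x :=
          Metric.infDist_le_dist_of_mem (by simpa [Set.mem_preimage] using hx)
      _ = dist x (e j) := dist_comm _ _
      _ < ε/4 := hj
  obtain ⟨q, hq1, hq2⟩ := exists_rat_btwn hdjz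
  have hzS : z ∈ Sset (j, q) := le_of_lt hq1
  have hzint : z ∈ interior (Sset (j, q)) := by
    by_contra hni
    exact hz (j, q) ⟨subset_closure hzS, hni⟩
  obtain ⟨δ, hδ, hball⟩ := Metric.isOpen_iff.1 isOpen_interior z hzint
  refine ⟨δ, hδ, ?_⟩
  intro ζ hζ
  have hζS : ζ ∈ Sset (j, q) := interior_subset (hball (by rwa [Metric.mem_ball]))
  have hζS' : Metric.infDist (e j) (φ ⁻¹' {ζ}) ≤ (q:ℝ) := hζS
  calc Metric.infDist x (φ ⁻¹' {ζ})
      ≤ Metric.infDist (e j) (φ ⁻¹' {ζ}) + dist x (e j) := Metric.infDist_le_infDist_add_dist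
    _ ≤ (q:ℝ) + dist x (e j) := by linarith
    _ < (ε/4 + ε/4) + ε/4 := by linarith
    _ < ε := by linarith

end GoodPoints

section PointedLift

variable {X Z : Type*} [MetricSpace X] [CompactSpace X] [MetricSpace Z] [CompactSpace Z]
  (T : X ≃ₜ X) (R : Z ≃ₜ Z)

lemma tendsto_const_div_succ (C : ℝ) : Tendsto (fun k : ℕ => C/((k:ℝ)+1)) atTop (𝓝 0) := by
  have := tendsto_one_div_succ.const_mul C
  simpa [div_eq_mul_inv] using this

lemma tendsto_of_dist_lt_div_succ {g : ℕ → Z} {L : Z} {C : ℝ}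
    (h : ∀ k, dist (g k) L < C/((k:ℝ)+1)) : Tendsto g atTop (𝓝 L) := by
  rw [tendsto_iff_dist_tendsto_zero]
  exact squeeze_zero (fun k => dist_nonneg) (fun k => (h k).le) (tendsto_const_div_succ C)

lemma exists_translate (hZ : IsMinimalSystem R) (ζ₀ : Z) {r : ℝ} (hr : 0 < r) :
    ∃ F : Finset ℤ, ∀ ζ : Z, ∃ m ∈ F, dist (zIter R m ζ) ζ₀ < r := by
  have hopen : ∀ m : ℤ, IsOpen ((zIter R m)⁻¹' (Metric.ball ζ₀ r)) :=
    fun m => Metric.isOpen_ball.preimage (continuous_zIter R m)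
  have hcov : (Set.univ : Set Z) ⊆ ⋃ m : ℤ, (zIter R m)⁻¹' (Metric.ball ζ₀ r) := by
    intro ζ _
    obtain ⟨p, hp, hpball⟩ := (hZ ζ).exists_mem_open Metric.isOpen_ball
      ⟨ζ₀, Metric.mem_ball_self hr⟩
    obtain ⟨m, rfl⟩ := hp
    exact Set.mem_iUnion.2 ⟨m, by simpa using hpball⟩
  obtain ⟨F, hF⟩ := isCompact_univ.elim_finite_subcover _ hopen hcov
  refine ⟨F, fun ζ => ?_⟩
  have := hF (Set.mem_univ ζ)
  rw [Set.mem_iUnion₂] at this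
  obtain ⟨m, hmF, hm⟩ := this
  exact ⟨m, hmF, by simpa [Metric.mem_ball] using hm⟩

lemma finset_unif (F : Finset ℤ) {r : ℝ} (hr : 0 < r) :
    ∃ δ > (0:ℝ), ∀ m ∈ F, ∀ u v : Z, dist u v < δ → dist (zIter R m u) (zIter R m v) < r := by
  classical
  induction F using Finset.induction_on with
  | empty => exact ⟨1, one_pos, by simp⟩
  | insert m F hm ih =>
      obtain ⟨δ, hδ0, hδ⟩ := ih
      have huc : UniformContinuous (zIter R m) :=
        CompactSpace.uniformContinuous_of_continuous (continuous_zIter R m)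
      obtain ⟨δ', hδ'0, hδ'⟩ := Metric.uniformContinuous_iff.1 huc r hr
      refine ⟨min δ δ', lt_min hδ0 hδ'0, ?_⟩
      intro m' hm' u v huv
      rcases Finset.mem_insert.1 hm' with h | h
      · subst h
        exact hδ' (lt_of_lt_of_le huv (min_le_right _ _))
      · exact hδ m' h u v (lt_of_lt_of_le huv (min_le_left _ _))

lemma infDist_tendsto_zero_of_good {φ : X → Z} {z₀ : Z} (hg : GoodPt φ z₀)
    {x : X} (hx : φ x = z₀) {g : ℕ → Z} (hgz : Tendsto g atTop (𝓝 z₀)) :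
    Tendsto (fun k => Metric.infDist x (φ ⁻¹' {g k})) atTop (𝓝 0) := by
  rw [Metric.tendsto_atTop]
  intro ε hε
  obtain ⟨δ, hδ0, hδ⟩ := hg x hx ε hε
  have hev : ∀ᶠ k in atTop, dist (g k) z₀ < δ := by
    have := Metric.tendsto_nhds.1 hgz δ hδ0
    simpa using this
  obtain ⟨K, hK⟩ := Filter.eventually_atTop.1 hev
  refine ⟨K, fun k hk => ?_⟩
  have h1 := hδ (g k) (hK k hk)
  rw [Real.dist_eq, sub_zero, abs_of_nonneg Metric.infDist_nonneg]
  exact h1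

lemma pointed_lift (hZ : IsMinimalSystem R) (φ : X → Z) (hφcont : Continuous φ)
    (hs : Function.Surjective φ) (hfac : ∀ x, φ (T x) = R (φ x))
    {z w : Z} (hzw : (z, w) ∈ RP R) {a : X} (ha : φ a = z)
    (hgz : GoodPt φ z) {ζ₀ : Z} (hgζ : GoodPt φ ζ₀) :
    ∃ x', φ x' = w ∧ (a, x') ∈ RP T := by
  have fiberne : ∀ ζ : Z, (φ ⁻¹' {ζ}).Nonempty := by
    intro ζ
    obtain ⟨x, hx⟩ := hs ζ
    exact ⟨x, by simpa using hx⟩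
  -- Step 1/2 : approximating pairs whose iterates land near ζ₀
  have key : ∀ k : ℕ, ∃ (P Q : Z) (N : ℤ),
      dist P z < 1/((k:ℝ)+1) ∧ dist Q w < 1/((k:ℝ)+1) ∧
      dist (zIter R N P) ζ₀ < 1/((k:ℝ)+1) ∧ dist (zIter R N Q) ζ₀ < 2/((k:ℝ)+1) := by
    intro k
    have hr : (0:ℝ) < 1/((k:ℝ)+1) := by positivity
    obtain ⟨F, hF⟩ := exists_translate R hZ ζ₀ hr
    obtain ⟨δ, hδ0, hδ⟩ := finset_unif R F hr
    obtain ⟨u, v, n, hu, hv, hco⟩ := hzw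
    simp only at hu hv
    have e1 : ∀ᶠ i in atTop, dist (u i) z < 1/((k:ℝ)+1) := by
      have := Metric.tendsto_nhds.1 hu _ hr
      simpa using this
    have e2 : ∀ᶠ i in atTop, dist (v i) w < 1/((k:ℝ)+1) := by
      have := Metric.tendsto_nhds.1 hv _ hr
      simpa using this
    have e3 : ∀ᶠ i in atTop, dist (zIter R (n i) (u i)) (zIter R (n i) (v i)) < δ :=
      hco.eventually (gt_mem_nhds hδ0)
    obtain ⟨i, h1, h2, h3⟩ := (e1.and (e2.and e3)).exists
    obtain ⟨m, hmF, hm⟩ := hF (zIter R (n i) (u i))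
    refine ⟨u i, v i, m + n i, h1, h2, ?_, ?_⟩
    · rw [zIter_add]
      exact hm
    · rw [zIter_add]
      have hd2 : dist (zIter R m (zIter R (n i) (v i))) (zIter R m (zIter R (n i) (u i)))
          < 1/((k:ℝ)+1) := hδ m hmF _ _ (by rw [dist_comm]; exact h3)
      calc dist (zIter R m (zIter R (n i) (v i))) ζ₀
          ≤ dist (zIter R m (zIter R (n i) (v i))) (zIter R m (zIter R (n i) (u i)))
            + dist (zIter R m (zIter R (n i) (u i))) ζ₀ := dist_triangle _ _ _
        _ < 1/((k:ℝ)+1) + 1/((k:ℝ)+1) := by exact add_lt_add hd2 hm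
        _ = 2/((k:ℝ)+1) := by ring
  choose P Q N f1 f2 f3 f5 using key
  -- Step 3 : lifts of P near a
  have hPz : Tendsto P atTop (𝓝 z) := tendsto_of_dist_lt_div_succ f1
  have hinfP : Tendsto (fun k => Metric.infDist a (φ ⁻¹' {P k})) atTop (𝓝 0) :=
    infDist_tendsto_zero_of_good hgz ha hPz
  have haex : ∀ k, ∃ b, φ b = P k ∧
      dist a b < Metric.infDist a (φ ⁻¹' {P k}) + 1/((k:ℝ)+1) := by
    intro k
    have hlt : Metric.infDist a (φ ⁻¹' {P k})
        < Metric.infDist a (φ ⁻¹' {P k}) + 1/((k:ℝ)+1) :=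
      lt_add_of_pos_right _ (show (0:ℝ) < 1/((k:ℝ)+1) by positivity)
    obtain ⟨b, hb, hdb⟩ := (Metric.infDist_lt_iff (fiberne (P k))).1 hlt
    exact ⟨b, by simpa using hb, hdb⟩
  choose aseq haseqφ haseqd using haex
  have haseqa : Tendsto aseq atTop (𝓝 a) := by
    rw [tendsto_iff_dist_tendsto_zero]
    apply squeeze_zero (fun k => dist_nonneg)
      (g := fun k => Metric.infDist a (φ ⁻¹' {P k}) + 1/((k:ℝ)+1))
    · intro k
      rw [dist_comm]
      exact (haseqd k).le
    · have := hinfP.add tendsto_one_div_succ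
      simpa using this
  -- Step 4 : limit point of iterates over ζ₀
  set cseq : ℕ → X := fun k => zIter T (N k) (aseq k) with hcseq
  obtain ⟨c, -, σ₁, hσ₁, hc1⟩ := isCompact_univ.tendsto_subseq (fun k => Set.mem_univ (cseq k))
  have hφcseq : ∀ k, φ (cseq k) = zIter R (N k) (P k) := by
    intro k
    rw [hcseq]
    simp only
    rw [zIter_factor T R φ hfac, haseqφ]
  have hφc : φ c = ζ₀ := by
    have t1 : Tendsto (fun k => φ (cseq (σ₁ k))) atTop (𝓝 (φ c)) := (hφcont.tendsto c).comp hc1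
    have t2 : Tendsto (fun k => φ (cseq (σ₁ k))) atTop (𝓝 ζ₀) := by
      have heq : (fun k => φ (cseq (σ₁ k))) = (fun k => zIter R (N k) (P k)) ∘ σ₁ := by
        funext k
        exact hφcseq (σ₁ k)
      rw [heq]
      exact (tendsto_of_dist_lt_div_succ f3).comp hσ₁.tendsto_atTop
    exact tendsto_nhds_unique t1 t2
  -- Step 5 : lifts of the Q-iterates near c
  set Wseq : ℕ → Z := fun k => zIter R (N k) (Q k) with hWseq
  have hWζ : Tendsto Wseq atTop (𝓝 ζ₀) := tendsto_of_dist_lt_div_succ f5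
  have hinfW : Tendsto (fun k => Metric.infDist c (φ ⁻¹' {Wseq k})) atTop (𝓝 0) :=
    infDist_tendsto_zero_of_good hgζ hφc hWζ
  have hb₁ex : ∀ k, ∃ b, φ b = Wseq k ∧
      dist c b < Metric.infDist c (φ ⁻¹' {Wseq k}) + 1/((k:ℝ)+1) := by
    intro k
    have hlt : Metric.infDist c (φ ⁻¹' {Wseq k})
        < Metric.infDist c (φ ⁻¹' {Wseq k}) + 1/((k:ℝ)+1) :=
      lt_add_of_pos_right _ (show (0:ℝ) < 1/((k:ℝ)+1) by positivity)
    obtain ⟨b, hb, hdb⟩ := (Metric.infDist_lt_iff (fiberne (Wseq k))).1 hlt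
    exact ⟨b, by simpa using hb, hdb⟩
  choose bt hbtφ hbtd using hb₁ex
  have hbtc : Tendsto (fun k => dist c (bt k)) atTop (𝓝 0) := by
    apply squeeze_zero (fun k => dist_nonneg)
      (g := fun k => Metric.infDist c (φ ⁻¹' {Wseq k}) + 1/((k:ℝ)+1))
    · exact fun k => (hbtd k).le
    · have := hinfW.add tendsto_one_div_succ
      simpa using this
  -- Step 6 : pull the lifts back
  set bh : ℕ → X := fun k => zIter T (-(N k)) (bt k) with hbh
  have hbhφ : ∀ k, φ (bh k) = Q k := by
    intro k
    rw [hbh]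
    simp only
    rw [zIter_factor T R φ hfac, hbtφ, hWseq]
    simp only
    exact zIter_neg_cancel R (N k) (Q k)
  obtain ⟨x', -, σ₂, hσ₂, hb₂conv⟩ :=
    isCompact_univ.tendsto_subseq (fun k => Set.mem_univ ((bh ∘ σ₁) k))
  have hφx' : φ x' = w := by
    have t1 : Tendsto (fun k => φ ((bh ∘ σ₁ ∘ σ₂) k)) atTop (𝓝 (φ x')) :=
      (hφcont.tendsto x').comp hb₂conv
    have t2 : Tendsto (fun k => φ ((bh ∘ σ₁ ∘ σ₂) k)) atTop (𝓝 w) := by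
      have heq : (fun k => φ ((bh ∘ σ₁ ∘ σ₂) k)) = Q ∘ (σ₁ ∘ σ₂) := by
        funext k
        exact hbhφ (σ₁ (σ₂ k))
      rw [heq]
      exact (tendsto_of_dist_lt_div_succ f2).comp ((hσ₁.comp hσ₂).tendsto_atTop)
    exact tendsto_nhds_unique t1 t2
  -- Step 7 : conclude
  refine ⟨x', hφx', ?_⟩
  have hcancel : ∀ j, zIter T (N j) (bh j) = bt j := by
    intro j
    rw [hbh]
    simp only
    have := zIter_neg_cancel T (-(N j)) (bt j)
    simpa using this
  refine RP_of_approx T (aseq ∘ (σ₁ ∘ σ₂)) (bh ∘ (σ₁ ∘ σ₂)) (N ∘ (σ₁ ∘ σ₂)) ?_ ?_ ?_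
  · exact haseqa.comp ((hσ₁.comp hσ₂).tendsto_atTop)
  · exact hb₂conv
  · have hbound : ∀ k, dist (zIter T ((N ∘ (σ₁ ∘ σ₂)) k) ((aseq ∘ (σ₁ ∘ σ₂)) k))
        (zIter T ((N ∘ (σ₁ ∘ σ₂)) k) ((bh ∘ (σ₁ ∘ σ₂)) k))
        ≤ dist (cseq (σ₁ (σ₂ k))) c + dist c (bt (σ₁ (σ₂ k))) := by
      intro k
      have h1 : zIter T ((N ∘ (σ₁ ∘ σ₂)) k) ((aseq ∘ (σ₁ ∘ σ₂)) k) = cseq (σ₁ (σ₂ k)) := rfl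
      have h2 : zIter T ((N ∘ (σ₁ ∘ σ₂)) k) ((bh ∘ (σ₁ ∘ σ₂)) k) = bt (σ₁ (σ₂ k)) :=
        hcancel (σ₁ (σ₂ k))
      rw [h1, h2]
      exact dist_triangle _ _ _
    apply squeeze_zero (fun k => dist_nonneg)
      (g := fun k => dist (cseq (σ₁ (σ₂ k))) c + dist c (bt (σ₁ (σ₂ k))))
    · exact hbound
    · have t1 : Tendsto (fun k => dist (cseq (σ₁ (σ₂ k))) c) atTop (𝓝 0) := by
        have := tendsto_iff_dist_tendsto_zero.1 hc1
        exact this.comp hσ₂.tendsto_atTop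
      have t2 : Tendsto (fun k => dist c (bt (σ₁ (σ₂ k)))) atTop (𝓝 0) :=
        hbtc.comp ((hσ₁.comp hσ₂).tendsto_atTop)
      simpa using t1.add t2

end PointedLift

section MainAux

variable {X : Type*} [MetricSpace X] (T : X ≃ₜ X)

lemma RP_mem_iff (a b : X) : (a, b) ∈ RP T ↔ (T a, T b) ∈ RP T := by
  constructor
  · exact RP_map T
  · intro h
    have := RP_map_symm T h
    simpa using this

end MainAux


/-- quasi-disjointness passes to factors. -/
theorem stmt11 {X Y Z : Type*} [MetricSpace X] [CompactSpace X]
    [MetricSpace Y] [CompactSpace Y] [MetricSpace Z] [CompactSpace Z]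
    (T : X ≃ₜ X) (S : Y ≃ₜ Y) (R : Z ≃ₜ Z)
    (hX : IsMinimalSystem T) (hY : IsMinimalSystem S) (hZ : IsMinimalSystem R)
    (φ : X → Z) (hφ : IsFactorMap T R φ)
    (hQD : QuasiDisjoint T S) :
    QuasiDisjoint R S := by
  obtain ⟨hφc, hφs, hfac⟩ := hφ
  intro J hJ hFEP
  obtain ⟨hJcl, hJinv, hJp1, hJp2⟩ := hJ
  -- trivial degenerate cases
  rcases isEmpty_or_nonempty X with hXe | hXne
  · have hZe : IsEmpty Z := ⟨fun ζ => by
      obtain ⟨x, -⟩ := hφs ζ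
      exact hXe.false x⟩
    apply Set.eq_univ_of_forall
    intro p
    exact (hZe.false p.1).elim
  rcases isEmpty_or_nonempty Y with hYe | hYne
  · apply Set.eq_univ_of_forall
    intro p
    exact (hYe.false p.2).elim
  haveI := hXne
  haveI := hYne
  haveI : Nonempty Z := ⟨φ (Classical.arbitrary X)⟩
  -- the big relation Γ₀ whose first projection witnesses FullEqProjection of the pullback
  set Γ₀ : Set ((X × Y) × (X × Y)) :=
    {q | (q.1.1, q.2.1) ∈ RP T ∧ (q.1.2, q.2.2) ∈ RP S ∧ (φ q.2.1, q.2.2) ∈ J} with hΓ₀def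
  have hΓ₀cl : IsClosed Γ₀ := by
    have h1 : IsClosed ((fun q : (X × Y) × (X × Y) => (q.1.1, q.2.1)) ⁻¹' RP T) :=
      (isClosed_RP T).preimage
        ((continuous_fst.comp continuous_fst).prodMk (continuous_fst.comp continuous_snd))
    have h2 : IsClosed ((fun q : (X × Y) × (X × Y) => (q.1.2, q.2.2)) ⁻¹' RP S) :=
      (isClosed_RP S).preimage
        ((continuous_snd.comp continuous_fst).prodMk (continuous_snd.comp continuous_snd))
    have h3 : IsClosed ((fun q : (X × Y) × (X × Y) => (φ q.2.1, q.2.2)) ⁻¹' J) :=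
      hJcl.preimage
        ((hφc.comp (continuous_fst.comp continuous_snd)).prodMk
          (continuous_snd.comp continuous_snd))
    exact (h1.inter (h2.inter h3))
  -- membership stability of J
  have hJiff : ∀ p : Z × Y, p ∈ J ↔ (R p.1, S p.2) ∈ J := by
    intro p
    exact mem_iff_of_image_eq (R.prodCongr S) hJinv p
  -- dense minimal points
  have hdense := dense_minimal_points T S hX hY
  -- dense good points, pick one
  have hgood := dense_goodPt φ hφc hφs
  obtain ⟨zstar, hzstar⟩ : ∃ ζ : Z, GoodPt φ ζ := by
    obtain ⟨ζ, hζ⟩ := hgood.nonempty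
    exact ⟨ζ, hζ⟩
  obtain ⟨a, ha⟩ := hφs zstar
  -- every minimal point lies in the first projection of Γ₀
  have hmin_in : ∀ ξ : X × Y, (∃ Λ, IsMinimalSubset (T.prodCongr S) Λ ∧ ξ ∈ Λ) →
      ξ ∈ Prod.fst '' Γ₀ := by
    rintro ξ ⟨Λ, hΛ, hξΛ⟩
    -- there is a Λ-partner over a
    have hΛfst : Prod.fst '' Λ = Set.univ :=
      eq_univ_of_closed_invariant T hX
        ((hΛ.2.1.isCompact.image continuous_fst).isClosed)
        (hΛ.1.image _) (fst_image_invariant T S hΛ.2.2.1)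
    obtain ⟨p₀, hp₀Λ, hp₀⟩ : ∃ p ∈ Λ, Prod.fst p = a := by
      have : a ∈ Prod.fst '' Λ := hΛfst ▸ Set.mem_univ a
      obtain ⟨p, hp, hp1⟩ := this
      exact ⟨p, hp, hp1⟩
    set c : Y := p₀.2 with hcdef
    have hacΛ : (a, c) ∈ Λ := by
      have : p₀ = (a, c) := by
        rw [hcdef, ← hp₀]
      rwa [this] at hp₀Λ
    -- the auxiliary relation tying Λ to J through RP-cells
    set Γt : Set ((X × Y) × (Z × Y)) :=
      {q | q.1 ∈ Λ ∧ (φ q.1.1, q.2.1) ∈ RP R ∧ (q.1.2, q.2.2) ∈ RP S ∧ q.2 ∈ J} with hΓtdef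
    have hΓtcl : IsClosed Γt := by
      have h0 : IsClosed ((fun q : (X × Y) × (Z × Y) => q.1) ⁻¹' Λ) :=
        hΛ.2.1.preimage continuous_fst
      have h1 : IsClosed ((fun q : (X × Y) × (Z × Y) => (φ q.1.1, q.2.1)) ⁻¹' RP R) :=
        (isClosed_RP R).preimage
          ((hφc.comp (continuous_fst.comp continuous_fst)).prodMk
            (continuous_fst.comp continuous_snd))
      have h2 : IsClosed ((fun q : (X × Y) × (Z × Y) => (q.1.2, q.2.2)) ⁻¹' RP S) :=
        (isClosed_RP S).preimage
          ((continuous_snd.comp continuous_fst).prodMk (continuous_snd.comp continuous_snd))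
      have h3 : IsClosed ((fun q : (X × Y) × (Z × Y) => q.2) ⁻¹' J) :=
        hJcl.preimage continuous_snd
      exact h0.inter (h1.inter (h2.inter h3))
    have hΓtinv : ((T.prodCongr S).prodCongr (R.prodCongr S)) '' Γt = Γt := by
      apply image_eq_of_mem_iff
      intro q
      show (q.1 ∈ Λ ∧ (φ q.1.1, q.2.1) ∈ RP R ∧ (q.1.2, q.2.2) ∈ RP S ∧ q.2 ∈ J) ↔
        ((T q.1.1, S q.1.2) ∈ Λ ∧ (φ (T q.1.1), R q.2.1) ∈ RP R ∧
          (S q.1.2, S q.2.2) ∈ RP S ∧ (R q.2.1, S q.2.2) ∈ J)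
      rw [hfac]
      constructor
      · rintro ⟨m0, m1, m2, m3⟩
        refine ⟨?_, (RP_mem_iff R _ _).1 m1, (RP_mem_iff S _ _).1 m2, (hJiff _).1 m3⟩
        have := (mem_iff_of_image_eq (T.prodCongr S) hΛ.2.2.1 q.1).1 m0
        exact this
      · rintro ⟨m0, m1, m2, m3⟩
        refine ⟨?_, (RP_mem_iff R _ _).2 m1, (RP_mem_iff S _ _).2 m2, (hJiff _).2 m3⟩
        exact (mem_iff_of_image_eq (T.prodCongr S) hΛ.2.2.1 q.1).2 m0
    have hΓtne : Γt.Nonempty := by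
      obtain ⟨pj, hpjJ, hpj1, hpj2⟩ := hFEP (φ ξ.1) ξ.2
      exact ⟨(ξ, pj), hξΛ, hpj1, hpj2, hpjJ⟩
    have hΓtsub : ∀ q ∈ Γt, q.1 ∈ Λ := fun q hq => hq.1
    -- pick the Γt-point over (a, c)
    obtain ⟨qt, hqtΓ, hqt1⟩ := exists_mem_minimal_fiber (T.prodCongr S) (R.prodCongr S)
      hΛ hΓtcl hΓtne hΓtinv hΓtsub hacΛ
    obtain ⟨-, hqt2, hqt3, hqt4⟩ := hqtΓ
    rw [hqt1] at hqt2 hqt3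
    -- pointed lifting at a
    have hzw : (zstar, qt.2.1) ∈ RP R := by
      rwa [← ha]
    obtain ⟨x', hx'φ, hx'RP⟩ :=
      pointed_lift T R hZ φ hφc hφs hfac hzw ha hzstar hzstar
    -- the final relation
    set Γ : Set ((X × Y) × (X × Y)) := Γ₀ ∩ {q | q.1 ∈ Λ} with hΓdef
    have hΓcl : IsClosed Γ := hΓ₀cl.inter (hΛ.2.1.preimage continuous_fst)
    have hΓ₀inv : ∀ q : (X × Y) × (X × Y), q ∈ Γ₀ ↔
        ((T.prodCongr S).prodCongr (T.prodCongr S)) q ∈ Γ₀ := by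
      intro q
      show ((q.1.1, q.2.1) ∈ RP T ∧ (q.1.2, q.2.2) ∈ RP S ∧ (φ q.2.1, q.2.2) ∈ J) ↔
        ((T q.1.1, T q.2.1) ∈ RP T ∧ (S q.1.2, S q.2.2) ∈ RP S ∧ (φ (T q.2.1), S q.2.2) ∈ J)
      rw [hfac]
      exact and_congr (RP_mem_iff T _ _)
        (and_congr (RP_mem_iff S _ _) (hJiff _))
    have hΓinv : ((T.prodCongr S).prodCongr (T.prodCongr S)) '' Γ = Γ := by
      apply image_eq_of_mem_iff
      intro q
      constructor
      · rintro ⟨h0, h1⟩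
        exact ⟨(hΓ₀inv q).1 h0,
          (mem_iff_of_image_eq (T.prodCongr S) hΛ.2.2.1 q.1).1 h1⟩
      · rintro ⟨h0, h1⟩
        exact ⟨(hΓ₀inv q).2 h0,
          (mem_iff_of_image_eq (T.prodCongr S) hΛ.2.2.1 q.1).2 h1⟩
    have hΓne : Γ.Nonempty := by
      refine ⟨((a, c), (x', qt.2.2)), ⟨hx'RP, hqt3, ?_⟩, hacΛ⟩
      rw [hx'φ]
      exact hqt4
    have hΓsub : ∀ q ∈ Γ, q.1 ∈ Λ := fun q hq => hq.2
    obtain ⟨q, hqΓ, hq1⟩ := exists_mem_minimal_fiber (T.prodCongr S) (T.prodCongr S)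
      hΛ hΓcl hΓne hΓinv hΓsub hξΛ
    exact ⟨q, hqΓ.1, hq1⟩
  -- first projection of Γ₀ is everything
  have hGuniv : Prod.fst '' Γ₀ = Set.univ := by
    have hGcl : IsClosed (Prod.fst '' Γ₀) := (hΓ₀cl.isCompact.image continuous_fst).isClosed
    have hGdense : Dense (Prod.fst '' Γ₀) := hdense.mono hmin_in
    rw [← hGcl.closure_eq]
    exact hGdense.closure_eq
  -- the pullback joining
  set Jh : Set (X × Y) := {p | (φ p.1, p.2) ∈ J} with hJhdef
  have hJhjoin : IsJoining T S Jh := by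
    refine ⟨hJcl.preimage (Continuous.prodMk (hφc.comp continuous_fst) continuous_snd), ?_, ?_, ?_⟩
    · apply image_eq_of_mem_iff
      intro p
      show (φ p.1, p.2) ∈ J ↔ (φ (T p.1), S p.2) ∈ J
      rw [hfac]
      exact hJiff _
    · apply Set.eq_univ_of_forall
      intro x
      have : φ x ∈ Prod.fst '' J := hJp1 ▸ Set.mem_univ (φ x)
      obtain ⟨pj, hpj, hpj1⟩ := this
      refine ⟨(x, pj.2), ?_, rfl⟩
      show (φ x, pj.2) ∈ J
      rw [← hpj1]
      exact hpj
    · apply Set.eq_univ_of_forall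
      intro y
      have : y ∈ Prod.snd '' J := hJp2 ▸ Set.mem_univ y
      obtain ⟨pj, hpj, hpj2⟩ := this
      obtain ⟨x, hx⟩ := hφs pj.1
      refine ⟨(x, y), ?_, rfl⟩
      show (φ x, y) ∈ J
      rw [hx, ← hpj2]
      exact hpj
  have hJhfep : FullEqProjection T S Jh := by
    intro x y
    have : (x, y) ∈ Prod.fst '' Γ₀ := hGuniv ▸ Set.mem_univ (x, y)
    obtain ⟨q, hqΓ, hq1⟩ := this
    refine ⟨q.2, hqΓ.2.2, ?_, ?_⟩
    · have := hqΓ.1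
      rwa [hq1] at this
    · have := hqΓ.2.1
      rwa [hq1] at this
  have hJhuniv := hQD Jh hJhjoin hJhfep
  apply Set.eq_univ_of_forall
  intro p
  obtain ⟨x, hx⟩ := hφs p.1
  have : (x, p.2) ∈ Jh := hJhuniv ▸ Set.mem_univ (x, p.2)
  have hmem : (φ x, p.2) ∈ J := this
  rwa [hx] at hmem
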